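/- In a left quasigroup Q, the displacement group Dis(Q) equals the set of all products L_{x_1}^{k_1}···L_{x_n}^{k_n} with x_i ∈ Q and k_1 + ··· + k_n = 0; in particular LMlt(Q) = Dis(Q)·⟨L_a⟩ for every a ∈ Q. -/

import Mathlib

/-- A left quasigroup: left multiplications are bijective. -/
class LQgrp (Q : Type*) where
  mul : Q → Q → Q
  ld : Q → Q → Q
  ld_mul : ∀ x y, ld x (mul x y) = y
  mul_ld : ∀ x y, mul x (ld x y) = y

namespace LQgrp

variable {Q : Type*} [LQgrp Q]

/-- Left multiplication as a permutation. -/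
def LM (a : Q) : Equiv.Perm Q := ⟨mul a, ld a, ld_mul a, mul_ld a⟩

/-- The left multiplication group. -/
def LMlt (Q : Type*) [LQgrp Q] : Subgroup (Equiv.Perm Q) :=
  Subgroup.closure (Set.range (LM : Q → Equiv.Perm Q))

/-- Subalgebras: subsets closed under both operations. -/
def IsSubalg (S : Set Q) : Prop :=
  (∀ a ∈ S, ∀ b ∈ S, mul a b ∈ S) ∧ (∀ a ∈ S, ∀ b ∈ S, ld a b ∈ S)

/-- The subalgebra generated by a set. -/
def Sg (X : Set Q) : Set Q := ⋂₀ {S | IsSubalg S ∧ X ⊆ S}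

/-- A subset is connected if the group generated by its left translations
acts transitively on it. -/
def ConnectedSet (S : Set Q) : Prop :=
  ∀ a ∈ S, ∀ b ∈ S, ∃ h ∈ Subgroup.closure ((LM : Q → Equiv.Perm Q) '' S), h a = b

/-- `Q` is connected if `LMlt Q` acts transitively. -/
def Connected (Q : Type*) [LQgrp Q] : Prop := ∀ a b : Q, ∃ h ∈ LMlt Q, h a = b

/-- `Q` is superconnected if every subalgebra is connected. -/
def Superconnected (Q : Type*) [LQgrp Q] : Prop :=
  ∀ S : Set Q, IsSubalg S → ConnectedSet S

/-- Faithfulness of a subalgebra: distinct elements have distinct left translations. -/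
def FaithfulOn (S : Set Q) : Prop :=
  ∀ a ∈ S, ∀ b ∈ S, (∀ c ∈ S, mul a c = mul b c) → a = b

/-- `Q` is superfaithful if every subalgebra is faithful. -/
def Superfaithful (Q : Type*) [LQgrp Q] : Prop :=
  ∀ S : Set Q, IsSubalg S → FaithfulOn S

/-- Latin: right multiplications are bijective. -/
def Latin (Q : Type*) [LQgrp Q] : Prop := ∀ a : Q, Function.Bijective (fun b => mul b a)

/-- The displacement group of a rack/quandle. -/
def Dis (Q : Type*) [LQgrp Q] : Subgroup (Equiv.Perm Q) :=
  Subgroup.closure {g : Equiv.Perm Q | ∃ a b : Q, g = LM a * (LM b)⁻¹}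

end LQgrp

/-- A quandle: idempotent, left distributive left quasigroup. -/
class Qdl (Q : Type*) extends LQgrp Q where
  idem : ∀ x : Q, mul x x = x
  ldist : ∀ x y z : Q, mul x (mul y z) = mul (mul x y) (mul x z)

/-- An involutory quandle. -/
class InvQdl (Q : Type*) extends Qdl Q where
  invol : ∀ x y : Q, mul x (mul x y) = y

open LQgrp

/-- The displacement group: the smallest normal subgroup of `LMlt Q`
containing all `L_a L_b⁻¹`. -/
def Dis0 (Q : Type*) [LQgrp Q] : Subgroup (Equiv.Perm Q) :=
  Subgroup.closure
    {g : Equiv.Perm Q | ∃ h ∈ LMlt Q, ∃ a b : Q, g = h * (LM a * (LM b)⁻¹) * h⁻¹}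


namespace StmtAux

variable {Q : Type*} [LQgrp Q]

def F (l : List (Q × ℤ)) : Equiv.Perm Q := (l.map fun p => (LM p.1) ^ p.2).prod

def negRev (l : List (Q × ℤ)) : List (Q × ℤ) := l.reverse.map fun p => (p.1, -p.2)

lemma F_append (l₁ l₂ : List (Q × ℤ)) : F (l₁ ++ l₂) = F l₁ * F l₂ := by
  simp [F]

lemma F_negRev (l : List (Q × ℤ)) : F (negRev l) = (F l)⁻¹ := by
  induction l with
  | nil => simp [F, negRev]
  | cons p l ih =>
    have : negRev (p :: l) = negRev l ++ [(p.1, -p.2)] := by simp [negRev]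
    rw [this, F_append, ih]
    simp [F, mul_comm]

lemma sum_negRev (l : List (Q × ℤ)) :
    ((negRev l).map Prod.snd).sum = -(l.map Prod.snd).sum := by
  induction l with
  | nil => simp [negRev]
  | cons p l ih =>
    have : negRev (p :: l) = negRev l ++ [(p.1, -p.2)] := by simp [negRev]
    rw [this]; simp [ih]

lemma conj_mem_dis0 {h : Equiv.Perm Q} (hh : h ∈ LMlt Q) {d : Equiv.Perm Q}
    (hd : d ∈ Dis0 Q) : h * d * h⁻¹ ∈ Dis0 Q := by
  induction hd using Subgroup.closure_induction with
  | mem x hx =>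
    obtain ⟨h', hh', a, b, rfl⟩ := hx
    apply Subgroup.subset_closure
    exact ⟨h * h', mul_mem hh hh', a, b, by group⟩
  | one => simpa using one_mem _
  | mul x y hx hy px py =>
    have : h * (x * y) * h⁻¹ = (h * x * h⁻¹) * (h * y * h⁻¹) := by group
    rw [this]; exact mul_mem px py
  | inv x hx px =>
    have : h * x⁻¹ * h⁻¹ = (h * x * h⁻¹)⁻¹ := by group
    rw [this]; exact inv_mem px

lemma LM_mem (a : Q) : LM a ∈ LMlt Q :=
  Subgroup.subset_closure ⟨a, rfl⟩

lemma LM_zpow_mem (a : Q) (k : ℤ) : (LM a) ^ k ∈ LMlt Q := zpow_mem (LM_mem a) k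

lemma gen_mem (a b : Q) : LM a * (LM b)⁻¹ ∈ Dis0 Q :=
  Subgroup.subset_closure ⟨1, one_mem _, a, b, by group⟩

lemma zpow_gen_mem (b a : Q) (k : ℤ) : (LM b) ^ k * ((LM a) ^ k)⁻¹ ∈ Dis0 Q := by
  induction k using Int.induction_on with
  | zero => simpa using one_mem _
  | succ n ih =>
    have : (LM b) ^ ((n : ℤ) + 1) * ((LM a) ^ ((n : ℤ) + 1))⁻¹ =
        (LM b * (LM a)⁻¹) * (LM a * ((LM b) ^ (n : ℤ) * ((LM a) ^ (n : ℤ))⁻¹) * (LM a)⁻¹) := by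
      rw [zpow_add_one, zpow_add_one]; group
    rw [this]
    exact mul_mem (gen_mem b a) (conj_mem_dis0 (LM_mem a) ih)
  | pred n ih =>
    have : (LM b) ^ (-(n : ℤ) - 1) * ((LM a) ^ (-(n : ℤ) - 1))⁻¹ =
        ((LM b)⁻¹ * ((LM b) ^ (-(n : ℤ)) * ((LM a) ^ (-(n : ℤ)))⁻¹) * (LM b)) *
          ((LM a)⁻¹ * (LM b * (LM a)⁻¹) * LM a)⁻¹ := by
      rw [zpow_sub_one, zpow_sub_one]; group
    rw [this]
    exact mul_mem (conj_mem_dis0 (inv_mem (LM_mem b)) ih)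
      (inv_mem (conj_mem_dis0 (inv_mem (LM_mem a)) (gen_mem b a)))

lemma key (a : Q) (l : List (Q × ℤ)) :
    ∃ d ∈ Dis0 Q, F l = d * (LM a) ^ (l.map Prod.snd).sum := by
  induction l with
  | nil => exact ⟨1, one_mem _, by simp [F]⟩
  | cons p l ih =>
    obtain ⟨d, hd, hFl⟩ := ih
    refine ⟨((LM p.1) ^ p.2 * ((LM a) ^ p.2)⁻¹) * ((LM a) ^ p.2 * d * ((LM a) ^ p.2)⁻¹),
      mul_mem (zpow_gen_mem p.1 a p.2) (conj_mem_dis0 (LM_zpow_mem a p.2) hd), ?_⟩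
    have : F (p :: l) = (LM p.1) ^ p.2 * F l := by simp [F]
    rw [this, hFl]
    simp only [List.map_cons, List.sum_cons, zpow_add]
    group

lemma mem_LMlt_list {g : Equiv.Perm Q} (hg : g ∈ LMlt Q) : ∃ l : List (Q × ℤ), g = F l := by
  induction hg using Subgroup.closure_induction with
  | mem x hx => obtain ⟨a, rfl⟩ := hx; exact ⟨[(a, 1)], by simp [F]⟩
  | one => exact ⟨[], by simp [F]⟩
  | mul x y _ _ px py =>
    obtain ⟨l₁, rfl⟩ := px; obtain ⟨l₂, rfl⟩ := py
    exact ⟨l₁ ++ l₂, (F_append l₁ l₂).symm⟩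
  | inv x _ px =>
    obtain ⟨l, rfl⟩ := px
    exact ⟨negRev l, (F_negRev l).symm⟩

end StmtAux

theorem stmt0 {Q : Type*} [LQgrp Q] :
    (∀ g : Equiv.Perm Q, g ∈ Dis0 Q ↔
      ∃ l : List (Q × ℤ), (l.map Prod.snd).sum = 0 ∧
        g = (l.map fun p => (LM p.1) ^ p.2).prod) ∧
    (∀ a : Q, ∀ g ∈ LMlt Q, ∃ d ∈ Dis0 Q, ∃ k : ℤ, g = d * (LM a) ^ k) := by
  open StmtAux in
  constructor
  · intro g
    constructor
    · intro hg
      induction hg using Subgroup.closure_induction with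
      | mem x hx =>
        obtain ⟨h, hh, a, b, rfl⟩ := hx
        obtain ⟨l, rfl⟩ := mem_LMlt_list hh
        refine ⟨l ++ [(a, 1), (b, -1)] ++ negRev l, ?_, ?_⟩
        · simp [sum_negRev]
        · show _ = F _
          rw [F_append, F_append, F_negRev]
          simp [F]
      | one => exact ⟨[], by simp [F]⟩
      | mul x y _ _ px py =>
        obtain ⟨l₁, hs₁, rfl⟩ := px; obtain ⟨l₂, hs₂, rfl⟩ := py
        exact ⟨l₁ ++ l₂, by simp [hs₁, hs₂], (F_append l₁ l₂).symm⟩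
      | inv x _ px =>
        obtain ⟨l, hs, rfl⟩ := px
        exact ⟨negRev l, by simp [sum_negRev, hs], (F_negRev l).symm⟩
    · rintro ⟨l, hs, rfl⟩
      match l, hs with
      | [], _ => simpa using one_mem _
      | (a, k) :: l, hs =>
        obtain ⟨d, hd, hF⟩ := key a ((a, k) :: l)
        rw [show ((((a,k) :: l).map fun p => (LM p.1) ^ p.2).prod : Equiv.Perm Q) =
          F ((a,k) :: l) from rfl, hF, hs]
        simpa using hd
  · intro a g hg
    obtain ⟨l, rfl⟩ := mem_LMlt_list hg
    obtain ⟨d, hd, hF⟩ := key a l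
    exact ⟨d, hd, _, hF⟩
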